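/- Suppose π(1) ≤ π(2) ≤ … ≤ π(n) and fix k ∈ {1,…,n}. Let G be the Gibbs orbit kernel for the partition of X into the blocks {1}, …, {k−1} and O_k := {k, k+1, …, n}. For every π-stationary stochastic matrix P, one has G·P·G = Π if and only if all of the following hold: (1) P(x,y) = π(y) for all x, y ∈ {1,…,k−1}; (2) Σ_{w∈O_k} P(x,w) = π(O_k) for all x ∈ {1,…,k−1}; (3) Σ_{z∈O_k} π(z)·P(z,y) = π(O_k)·π(y) for all y ∈ {1,…,k−1}; (4) Σ_{z∈O_k} Σ_{w∈O_k} π(z)·P(z,w) = π(O_k)². -/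

import Mathlib

open Matrix Finset

/-- Total mass of the orbit (block) `i` under `π`. -/
noncomputable def orbMass {n k : ℕ} (π : Fin n → ℝ) (part : Fin n → Fin k) (i : Fin k) : ℝ :=
  ∑ z ∈ Finset.univ.filter (fun z => part z = i), π z

/-- The Gibbs orbit kernel. -/
noncomputable def gibbsKer {n k : ℕ} (π : Fin n → ℝ) (part : Fin n → Fin k) :
    Matrix (Fin n) (Fin n) ℝ :=
  Matrix.of fun x y => if part y = part x then π y / orbMass π part (part x) else 0

/-- for the partition into the `k − 1` smallest singletons and the block
`O_k` of the `n − k + 1` largest states (encoded, 0-indexed, by `pO x = min x (k−1)`;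
so `x ∈ {1,…,k−1}` becomes `(x : ℕ) < k − 1` and `O_k = {z : k − 1 ≤ (z : ℕ)}`),
a `π`-stationary stochastic `P` satisfies `GPG = Π` iff conditions (1)–(4) hold. -/
theorem stmt18 {n k : ℕ} (hn : 0 < n) (hk : 0 < k) (hkn : k ≤ n)
    (π : Fin n → ℝ) (hπpos : ∀ x, 0 < π x) (hπsum : ∑ x, π x = 1)
    (hmono : ∀ x y : Fin n, x ≤ y → π x ≤ π y)
    (pO : Fin n → Fin k) (hpO : ∀ x : Fin n, (pO x : ℕ) = min (x : ℕ) (k - 1))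
    (P : Matrix (Fin n) (Fin n) ℝ)
    (hPnonneg : ∀ x y, 0 ≤ P x y) (hProw : ∀ x, ∑ y, P x y = 1)
    (hPstat : ∀ y, ∑ x, π x * P x y = π y) :
    gibbsKer π pO * P * gibbsKer π pO = Matrix.of (fun _ y => π y) ↔
      ((∀ x y : Fin n, (x : ℕ) < k - 1 → (y : ℕ) < k - 1 → P x y = π y) ∧
       (∀ x : Fin n, (x : ℕ) < k - 1 →
          ∑ w ∈ Finset.univ.filter (fun w : Fin n => k - 1 ≤ (w : ℕ)), P x w
            = ∑ z ∈ Finset.univ.filter (fun z : Fin n => k - 1 ≤ (z : ℕ)), π z) ∧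
       (∀ y : Fin n, (y : ℕ) < k - 1 →
          ∑ z ∈ Finset.univ.filter (fun z : Fin n => k - 1 ≤ (z : ℕ)), π z * P z y
            = (∑ z ∈ Finset.univ.filter (fun z : Fin n => k - 1 ≤ (z : ℕ)), π z) * π y) ∧
       (∑ z ∈ Finset.univ.filter (fun z : Fin n => k - 1 ≤ (z : ℕ)),
          ∑ w ∈ Finset.univ.filter (fun w : Fin n => k - 1 ≤ (w : ℕ)), π z * P z w
            = (∑ z ∈ Finset.univ.filter (fun z : Fin n => k - 1 ≤ (z : ℕ)), π z) ^ 2)) := by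
  classical
  set s : Finset (Fin n) := Finset.univ.filter (fun z : Fin n => k - 1 ≤ (z : ℕ)) with hs
  set c : ℝ := ∑ z ∈ s, π z with hcdef
  have hybprop : n - 1 < n := by omega
  set yb : Fin n := ⟨n - 1, hybprop⟩ with hyb
  have hybbig : k - 1 ≤ (yb : ℕ) := by simp [hyb]; omega
  have hybmem : yb ∈ s := by simp [hs, hyb]; omega
  have hcpos : 0 < c := Finset.sum_pos (fun z _ => hπpos z) ⟨yb, hybmem⟩
  have hcne : c ≠ 0 := ne_of_gt hcpos
  have hblock : ∀ x y : Fin n, (pO y = pO x) ↔ min (y : ℕ) (k - 1) = min (x : ℕ) (k - 1) := by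
    intro x y
    rw [← Fin.val_inj, hpO, hpO]
  have horbS : ∀ x : Fin n, (x : ℕ) < k - 1 → orbMass π pO (pO x) = π x := by
    intro x hx
    have hset : (Finset.univ.filter (fun z => pO z = pO x)) = {x} := by
      ext z
      simp only [Finset.mem_filter, Finset.mem_univ, true_and, Finset.mem_singleton,
        ← Fin.val_inj, hpO]
      omega
    rw [orbMass, hset, Finset.sum_singleton]
  have horbB : ∀ x : Fin n, k - 1 ≤ (x : ℕ) → orbMass π pO (pO x) = c := by
    intro x hx
    rw [orbMass, hcdef, hs]
    apply Finset.sum_congr _ (fun _ _ => rfl)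
    ext z
    simp only [Finset.mem_filter, Finset.mem_univ, true_and, ← Fin.val_inj, hpO]
    omega
  have hG1 : ∀ (x : Fin n), (x : ℕ) < k - 1 → ∀ f : Fin n → ℝ,
      (∑ z, gibbsKer π pO x z * f z) = f x := by
    intro x hx f
    rw [Finset.sum_eq_single x]
    · simp only [gibbsKer, Matrix.of_apply, if_pos rfl, horbS x hx,
        div_self (ne_of_gt (hπpos x)), one_mul, if_true, eq_self_iff_true]
    · intro z _ hz
      have hne : (z : ℕ) ≠ (x : ℕ) := fun hh => hz (Fin.val_inj.mp hh)
      simp only [gibbsKer, Matrix.of_apply]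
      have hb : ¬ (pO z = pO x) := by rw [hblock x z]; omega
      rw [if_neg hb, zero_mul]
    · intro h; exact absurd (Finset.mem_univ x) h
  have hG2 : ∀ (y : Fin n), (y : ℕ) < k - 1 → ∀ f : Fin n → ℝ,
      (∑ w, f w * gibbsKer π pO w y) = f y := by
    intro y hy f
    rw [Finset.sum_eq_single y]
    · simp only [gibbsKer, Matrix.of_apply, if_pos rfl, horbS y hy,
        div_self (ne_of_gt (hπpos y)), mul_one, if_true, eq_self_iff_true]
    · intro w _ hw
      have hne : (w : ℕ) ≠ (y : ℕ) := fun hh => hw (Fin.val_inj.mp hh)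
      simp only [gibbsKer, Matrix.of_apply]
      have hb : ¬ (pO y = pO w) := by rw [hblock w y]; omega
      rw [if_neg hb, mul_zero]
    · intro h; exact absurd (Finset.mem_univ y) h
  have hG3 : ∀ (x : Fin n), k - 1 ≤ (x : ℕ) → ∀ f : Fin n → ℝ,
      (∑ z, gibbsKer π pO x z * f z) = ∑ z ∈ s, (π z / c) * f z := by
    intro x hx f
    rw [hs, Finset.sum_filter]
    apply Finset.sum_congr rfl
    intro z _
    simp only [gibbsKer, Matrix.of_apply]
    by_cases h : k - 1 ≤ (z : ℕ)
    · have hb : pO z = pO x := (hblock x z).mpr (by omega)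
      rw [if_pos hb, if_pos h, horbB x hx]
    · have hb : ¬ (pO z = pO x) := by rw [hblock x z]; omega
      rw [if_neg hb, if_neg h, zero_mul]
  have hG4 : ∀ (y : Fin n), k - 1 ≤ (y : ℕ) → ∀ f : Fin n → ℝ,
      (∑ w, f w * gibbsKer π pO w y) = (∑ w ∈ s, f w) * (π y / c) := by
    intro y hy f
    rw [Finset.sum_mul, hs, Finset.sum_filter]
    apply Finset.sum_congr rfl
    intro w _
    simp only [gibbsKer, Matrix.of_apply]
    by_cases h : k - 1 ≤ (w : ℕ)
    · have hb : pO y = pO w := (hblock w y).mpr (by omega)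
      rw [if_pos hb, if_pos h, horbB w h]
    · have hb : ¬ (pO y = pO w) := by rw [hblock w y]; omega
      rw [if_neg hb, if_neg h, mul_zero]
  have hE : ∀ x y : Fin n, (gibbsKer π pO * P * gibbsKer π pO) x y
      = ∑ w, (∑ z, gibbsKer π pO x z * P z w) * gibbsKer π pO w y := by
    intro x y
    rw [Matrix.mul_apply]
    exact Finset.sum_congr rfl fun w _ => by rw [Matrix.mul_apply]
  constructor
  · intro hG
    have hEntry : ∀ x y : Fin n,
        (∑ w, (∑ z, gibbsKer π pO x z * P z w) * gibbsKer π pO w y) = π y := by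
      intro x y
      rw [← hE, hG]
      rfl
    refine ⟨?_, ?_, ?_, ?_⟩
    · intro x y hx hy
      have h := hEntry x y
      rw [hG2 y hy, hG1 x hx] at h
      exact h
    · intro x hx
      have h := hEntry x yb
      rw [hG4 yb hybbig] at h
      have hinner : (∑ w ∈ s, ∑ z, gibbsKer π pO x z * P z w) = ∑ w ∈ s, P x w :=
        Finset.sum_congr rfl fun w _ => hG1 x hx _
      rw [hinner] at h
      exact mul_right_cancel₀ (ne_of_gt (hπpos yb))
        (show (∑ w ∈ s, P x w) * π yb = c * π yb by
          field_simp at h; linarith)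
    · intro y hy
      have h := hEntry yb y
      rw [hG2 y hy, hG3 yb hybbig] at h
      have h2 : (∑ z ∈ s, π z * P z y) / c = π y := by
        rw [Finset.sum_div]
        rw [← h]
        exact Finset.sum_congr rfl fun z _ => by ring
      rw [div_eq_iff hcne] at h2
      rw [h2]
      ring
    · have h := hEntry yb yb
      rw [hG4 yb hybbig] at h
      have hinner : (∑ w ∈ s, ∑ z, gibbsKer π pO yb z * P z w)
          = (∑ w ∈ s, ∑ z ∈ s, π z * P z w) / c := by
        rw [Finset.sum_div]
        refine Finset.sum_congr rfl fun w _ => ?_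
        rw [hG3 yb hybbig, Finset.sum_div]
        exact Finset.sum_congr rfl fun z _ => by ring
      rw [hinner] at h
      have h2 : (∑ w ∈ s, ∑ z ∈ s, π z * P z w) = c ^ 2 := by
        have hne : π yb ≠ 0 := ne_of_gt (hπpos yb)
        refine mul_right_cancel₀ hne ?_
        field_simp at h
        rw [pow_two]
        linear_combination (π yb) * h
      rw [Finset.sum_comm] at h2
      exact h2
  · rintro ⟨h1, h2, h3, h4⟩
    ext x y
    rw [Matrix.of_apply, hE]
    by_cases hy : (y : ℕ) < k - 1
    · rw [hG2 y hy]
      by_cases hx : (x : ℕ) < k - 1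
      · rw [hG1 x hx]
        exact h1 x y hx hy
      · rw [hG3 x (by omega)]
        have : (∑ z ∈ s, π z / c * P z y) = (∑ z ∈ s, π z * P z y) / c := by
          rw [Finset.sum_div]
          exact Finset.sum_congr rfl fun z _ => by ring
        rw [this, h3 y hy]
        field_simp
    · have hy' : k - 1 ≤ (y : ℕ) := by omega
      rw [hG4 y hy']
      by_cases hx : (x : ℕ) < k - 1
      · have hinner : (∑ w ∈ s, ∑ z, gibbsKer π pO x z * P z w) = ∑ w ∈ s, P x w :=
          Finset.sum_congr rfl fun w _ => hG1 x hx _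
        rw [hinner, h2 x hx]
        field_simp
      · have step : ∀ w, (∑ z, gibbsKer π pO x z * P z w) = (∑ z ∈ s, π z * P z w) / c := by
          intro w
          rw [hG3 x (by omega), Finset.sum_div]
          exact Finset.sum_congr rfl fun z _ => by ring
        have hinner : (∑ w ∈ s, ∑ z, gibbsKer π pO x z * P z w)
            = (∑ z ∈ s, ∑ w ∈ s, π z * P z w) / c := by
          calc (∑ w ∈ s, ∑ z, gibbsKer π pO x z * P z w)
              = ∑ w ∈ s, (∑ z ∈ s, π z * P z w) / c :=
                Finset.sum_congr rfl fun w _ => step w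
            _ = (∑ w ∈ s, ∑ z ∈ s, π z * P z w) / c := by rw [Finset.sum_div]
            _ = (∑ z ∈ s, ∑ w ∈ s, π z * P z w) / c := by rw [Finset.sum_comm]
        rw [hinner, h4]
        field_simp
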